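/- For every positive integer k, the matrix (AB)^k equals [[a_{2k−1}, a_{2k}],[a_{2k}, a_{2k+1}]], where A = [[1,0],[a,−1]] and B = [[1,a],[0,−1]]. -/

import Mathlib

theorem genFib_matrix_pow (a : ℤ) (ha : 1 ≤ a) (f : ℕ → ℤ) (h0 : f 0 = 0) (h1 : f 1 = 1)
    (hrec : ∀ n, f (n + 2) = a * f (n + 1) + f n) :
    ∀ k : ℕ, 0 < k →
      (!![1, 0; a, -1] * !![1, a; 0, -1] : Matrix (Fin 2) (Fin 2) ℤ) ^ k =
        !![f (2 * k - 1), f (2 * k); f (2 * k), f (2 * k + 1)] := by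
  intro k hk
  induction k with
  | zero => omega
  | succ n ih =>
    rcases Nat.eq_zero_or_pos n with hn | hn
    · subst hn
      rw [pow_one]
      have h2 : f 2 = a := by rw [show 2 = 0 + 2 from rfl, hrec]; simp [h0, h1]
      have h3 : f 3 = a * a + 1 := by rw [show 3 = 1 + 2 from rfl, hrec]; simp [h1, h2]
      norm_num [Matrix.mul_fin_two, h1, h2, h3]
    · have := ih hn
      rw [pow_succ, this]
      have e1 : 2 * (n + 1) - 1 = 2 * n + 1 := by omega
      have e2 : 2 * (n + 1) = 2 * n + 2 := by omega
      have e3 : 2 * (n + 1) + 1 = 2 * n + 3 := by omega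
      have e0 : 2 * n - 1 + 1 = 2 * n := by omega
      have r1 : f (2 * n + 1) = a * f (2 * n) + f (2 * n - 1) := by
        have := hrec (2 * n - 1)
        rwa [show 2 * n - 1 + 2 = 2 * n + 1 by omega, e0] at this
      have r2 : f (2 * n + 2) = a * f (2 * n + 1) + f (2 * n) := hrec (2 * n)
      have r3 : f (2 * n + 3) = a * f (2 * n + 2) + f (2 * n + 1) := hrec (2 * n + 1)
      rw [e1, e3, e2]
      norm_num [Matrix.mul_fin_two, r1, r2, r3]
      ring_nf
      simp
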